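/- For each n, k >= 1 let G_{n,k} be a Ferrers graph whose associated partition is (nk, (n-1)k, ..., k). Then sum_{n>=1} ch(G_{n,k})(t) u^n = sum_{n>=1} [(t)_n ((t-1)_n)^k u^n] / prod_{i=1}^n (1 - i(t-i)^k u), where ch denotes the chromatic polynomial and (a)_n = a(a-1)...(a-n+1). -/

import Mathlib

attribute [local instance] Classical.propDecidable

noncomputable section

/-- A Ferrers graph, encoded by its biadjacency pattern between row vertices
`r_1, …, r_n` (indexed by `Fin n`) and column vertices `c_1, …, c_m`. -/
structure FerrersGraph where
  n : ℕ
  m : ℕ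
  hn : 0 < n
  hm : 0 < m
  adj : Fin n → Fin m → Prop
  mono : ∀ i i' : Fin n, ∀ j j' : Fin m, adj i j → i ≤ i' → j' ≤ j → adj i' j'
  corner1 : adj ⟨0, hn⟩ ⟨0, hm⟩
  corner2 : adj ⟨n - 1, Nat.sub_lt hn one_pos⟩ ⟨m - 1, Nat.sub_lt hm one_pos⟩

/-- The bipartite simple graph associated to a Ferrers graph. -/
def FerrersGraph.graph (G : FerrersGraph) : SimpleGraph (Fin G.n ⊕ Fin G.m) :=
  SimpleGraph.fromRel fun u v =>
    match u, v with
    | Sum.inl i, Sum.inr j => G.adj i j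
    | _, _ => False

/-- The partition associated to a Ferrers graph (the degrees of the row vertices),
recorded as a multiset. -/
def FerrersGraph.rowPartition (G : FerrersGraph) : Multiset ℕ :=
  Finset.univ.val.map fun i : Fin G.n => (Finset.univ.filter fun j => G.adj i j).card


section hfun
variable {R : Type*} [CommRing R] {S : Type*} [CommRing S]

/-- Complete homogeneous symmetric function in `a 1, …, a d`, degree `m`. -/
def hfun (a : ℕ → R) : ℕ → ℕ → R
  | 0, m => if m = 0 then 1 else 0
  | d+1, m => ∑ j ∈ Finset.range (m+1), hfun a d j * a (d+1) ^ (m - j)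

lemma hfun_zero_right (a : ℕ → R) : ∀ d, hfun a d 0 = 1
  | 0 => by simp [hfun]
  | d+1 => by simp [hfun, hfun_zero_right a d]

lemma hfun_succ_succ (a : ℕ → R) (d m : ℕ) :
    hfun a (d+1) (m+1) = hfun a d (m+1) + a (d+1) * hfun a (d+1) m := by
  rw [hfun, hfun, Finset.sum_range_succ, Finset.mul_sum]
  simp only [Nat.sub_self, pow_zero, mul_one]
  rw [add_comm]
  congr 1
  apply Finset.sum_congr rfl
  intro j hj
  simp only [Finset.mem_range] at hj
  have : m + 1 - j = (m - j) + 1 := by omega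
  rw [this, pow_succ]
  ring

lemma hfun_map (φ : R →+* S) (a : ℕ → R) : ∀ d m, φ (hfun a d m) = hfun (fun i => φ (a i)) d m
  | 0, m => by simp [hfun, apply_ite φ]
  | d+1, m => by
    simp only [hfun, map_sum, map_mul, map_pow]
    exact Finset.sum_congr rfl fun j _ => by rw [hfun_map φ a d j]

end hfun

section ps
variable {R : Type*} [CommRing R]
open PowerSeries

lemma geom_inverse (a : R) : (1 - C a * X) * PowerSeries.mk (fun m => a ^ m) = 1 := by
  ext n
  rw [sub_mul, one_mul, map_sub]
  cases n with
  | zero => simp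
  | succ n =>
    rw [mul_comm (C a) X, mul_assoc, PowerSeries.coeff_succ_X_mul]
    simp [pow_succ, mul_comm]

lemma prod_geom_inverse (s : Finset ℕ) (a : ℕ → R) :
    (∏ i ∈ s, (1 - C (a i) * X)) * (∏ i ∈ s, PowerSeries.mk (fun m => a i ^ m)) = 1 := by
  rw [← Finset.prod_mul_distrib]
  exact Finset.prod_eq_one fun i _ => geom_inverse (a i)

lemma invOfUnit_prod (s : Finset ℕ) (a : ℕ → R) :
    PowerSeries.invOfUnit (∏ i ∈ s, (1 - C (a i) * X)) 1
      = ∏ i ∈ s, PowerSeries.mk (fun m => a i ^ m) := by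
  have hc : constantCoeff (∏ i ∈ s, (1 - C (a i) * X) : R⟦X⟧) = (1 : Rˣ) := by
    rw [map_prod]
    simp
  have h1 := PowerSeries.mul_invOfUnit (∏ i ∈ s, (1 - C (a i) * X)) 1 hc
  have h2 := prod_geom_inverse s a
  calc PowerSeries.invOfUnit (∏ i ∈ s, (1 - C (a i) * X)) 1
      = ((∏ i ∈ s, PowerSeries.mk (fun m => a i ^ m)) * (∏ i ∈ s, (1 - C (a i) * X))) *
        PowerSeries.invOfUnit (∏ i ∈ s, (1 - C (a i) * X)) 1 := by
        rw [mul_comm _ (∏ i ∈ s, (1 - C (a i) * X)), h2, one_mul]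
    _ = _ := by rw [mul_assoc, h1, mul_one]

lemma coeff_prod_geom (a : ℕ → R) : ∀ d m,
    (PowerSeries.coeff m) (∏ i ∈ Finset.Icc 1 d, PowerSeries.mk (fun m => a i ^ m))
      = hfun a d m
  | 0, m => by
    simp [hfun, PowerSeries.coeff_one]
  | d+1, m => by
    rw [Finset.prod_Icc_succ_top (by omega : 1 ≤ d + 1), PowerSeries.coeff_mul,
      Finset.Nat.sum_antidiagonal_eq_sum_range_succ_mk, hfun]
    exact Finset.sum_congr rfl fun j _ => by
      rw [coeff_prod_geom a d j, PowerSeries.coeff_mk]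

end ps


section counting

def Sfn (q : ℕ) {n : ℕ} (f : Fin n → Fin q) (b : ℕ) : ℕ :=
  ((Finset.univ.filter fun i : Fin n => b ≤ (i : ℕ)).image f).card

def Wfn (q k : ℕ) {n : ℕ} (f : Fin n → Fin q) : ℤ :=
  ∏ b ∈ Finset.range n, ((q : ℤ) - Sfn q f b) ^ k

def Td (q k n d : ℕ) : ℤ :=
  ∑ f : Fin n → Fin q, if (Finset.univ.image f).card = d then Wfn q k f else 0

variable (q k : ℕ)

lemma image_cons {n : ℕ} (v : Fin q) (f : Fin n → Fin q) :
    Finset.image (Fin.cons v f : Fin (n+1) → Fin q) Finset.univ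
      = insert v (Finset.image f Finset.univ) := by
  rw [Fin.univ_succ, Finset.cons_eq_insert, Finset.image_insert, Fin.cons_zero,
    Finset.map_eq_image, Finset.image_image,
    show ((Fin.cons v f : Fin (n+1) → Fin q) ∘ ((⟨Fin.succ, Fin.succ_injective n⟩ : Fin n ↪ Fin (n+1)) : Fin n → Fin (n+1))) = f
      from funext fun i => Fin.cons_succ (α := fun _ => Fin q) v f i]

lemma Sfn_cons_succ {n : ℕ} (v : Fin q) (f : Fin n → Fin q) (b : ℕ) :
    Sfn q (Fin.cons v f : Fin (n+1) → Fin q) (b+1) = Sfn q f b := by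
  unfold Sfn
  congr 1
  rw [Fin.univ_succ, Finset.cons_eq_insert, Finset.filter_insert,
    if_neg (by simp : ¬ (b + 1 ≤ ((0 : Fin (n+1)) : ℕ))), Finset.filter_map,
    Finset.map_eq_image, Finset.image_image]
  rw [show ((Fin.cons v f : Fin (n+1) → Fin q) ∘ ((⟨Fin.succ, Fin.succ_injective n⟩ : Fin n ↪ Fin (n+1)) : Fin n → Fin (n+1)))
      = f from funext fun i => Fin.cons_succ (α := fun _ => Fin q) v f i]
  congr 2
  ext i
  simp [Function.comp, Nat.succ_le_succ_iff]

lemma Sfn_cons_zero {n : ℕ} (v : Fin q) (f : Fin n → Fin q) :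
    Sfn q (Fin.cons v f : Fin (n+1) → Fin q) 0
      = (insert v (Finset.image f Finset.univ)).card := by
  unfold Sfn
  rw [show (Finset.univ.filter fun i : Fin (n+1) => 0 ≤ (i:ℕ)) = Finset.univ by simp,
    image_cons]

lemma Wfn_cons {n : ℕ} (v : Fin q) (f : Fin n → Fin q) :
    Wfn q k (Fin.cons v f : Fin (n+1) → Fin q)
      = ((q:ℤ) - (insert v (Finset.image f Finset.univ)).card) ^ k * Wfn q k f := by
  unfold Wfn
  rw [Finset.prod_range_succ']
  rw [Sfn_cons_zero, mul_comm]
  congr 1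
  exact Finset.prod_congr rfl fun b _ => by rw [Sfn_cons_succ]

lemma count_sum (s : Finset (Fin q)) (d : ℕ) (c : ℤ) :
    (∑ v : Fin q, if (insert v s).card = d then c else 0)
      = (s.card : ℤ) * (if s.card = d then c else 0)
        + ((q : ℤ) - s.card) * (if s.card + 1 = d then c else 0) := by
  rw [← Finset.sum_add_sum_compl s]
  congr 1
  · rw [Finset.sum_congr rfl (fun v hv => by
      rw [Finset.insert_eq_self.2 hv]), Finset.sum_const, nsmul_eq_mul]
  · rw [Finset.sum_congr rfl (fun v hv => by
      rw [Finset.card_insert_of_notMem (Finset.mem_compl.1 hv)]),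
      Finset.sum_const, nsmul_eq_mul, Finset.card_compl, Fintype.card_fin]
    have : s.card ≤ q := by simpa using Finset.card_le_card (Finset.subset_univ s)
    push_cast [Nat.cast_sub this]
    ring

lemma Td_rec (n d : ℕ) (hd : 1 ≤ d) :
    Td q k (n+1) d = (d:ℤ) * ((q:ℤ) - d)^k * Td q k n d
      + ((q:ℤ) - ((d-1 : ℕ) : ℤ)) * ((q:ℤ) - d)^k * Td q k n (d-1) := by
  rw [Td, ← Equiv.sum_comp (Fin.consEquiv (fun _ : Fin (n+1) => Fin q))
      (fun f : Fin (n+1) → Fin q => if (Finset.univ.image f).card = d then Wfn q k f else 0),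
    Fintype.sum_prod_type]
  have step : ∀ v : Fin q, ∀ f : Fin n → Fin q,
      (if (Finset.univ.image ((Fin.consEquiv (fun _ : Fin (n+1) => Fin q)) (v, f))).card = d
          then Wfn q k ((Fin.consEquiv (fun _ : Fin (n+1) => Fin q)) (v, f)) else 0)
        = (if (insert v (Finset.image f Finset.univ)).card = d
            then ((q:ℤ)-d)^k * Wfn q k f else 0) := by
    intro v f
    have he : (Fin.consEquiv (fun _ : Fin (n+1) => Fin q)) (v, f) = Fin.cons v f := by
      simp [Fin.consEquiv]
    rw [he, image_cons, Wfn_cons]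
    by_cases h : (insert v (Finset.image f Finset.univ)).card = d
    · rw [if_pos h, if_pos h, h]
    · rw [if_neg h, if_neg h]
  rw [Finset.sum_congr rfl fun v _ => Finset.sum_congr rfl fun f _ => step v f]
  rw [Finset.sum_comm]
  rw [Finset.sum_congr rfl fun f _ => count_sum q (Finset.image f Finset.univ) d _]
  rw [Finset.sum_add_distrib]
  congr 1
  · rw [Td, Finset.mul_sum]
    refine Finset.sum_congr rfl fun f _ => ?_
    by_cases h : (Finset.univ.image f).card = d
    · rw [if_pos h, if_pos h, h]; ring
    · rw [if_neg h, if_neg h, mul_zero, mul_zero]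
  · rw [Td, Finset.mul_sum]
    refine Finset.sum_congr rfl fun f _ => ?_
    by_cases h : (Finset.univ.image f).card = d - 1
    · rw [if_pos h, if_pos (by omega : (Finset.univ.image f).card + 1 = d), h]; ring
    · rw [if_neg h, if_neg (by omega), mul_zero, mul_zero]

lemma Td_zero_right (n : ℕ) (hn : 1 ≤ n) : Td q k n 0 = 0 := by
  rw [Td]
  refine Finset.sum_eq_zero fun f _ => ?_
  rw [if_neg]
  have hne : (Finset.univ.image f).Nonempty := ⟨f ⟨0, hn⟩, Finset.mem_image_of_mem f (Finset.mem_univ _)⟩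
  have := Finset.card_pos.2 hne
  omega

lemma Td_gt (n d : ℕ) (hnd : n < d) : Td q k n d = 0 := by
  rw [Td]
  refine Finset.sum_eq_zero fun f _ => ?_
  rw [if_neg]
  have h1 : (Finset.univ.image f).card ≤ (Finset.univ : Finset (Fin n)).card :=
    Finset.card_image_le
  simp only [Finset.card_univ, Fintype.card_fin] at h1
  omega

lemma Td_zero_zero : Td q k 0 0 = 1 := by
  rw [Td]
  rw [Finset.sum_eq_single (Fin.elim0 : Fin 0 → Fin q)]
  · simp [Wfn]
  · intro f _ hf; exact absurd (Subsingleton.elim f Fin.elim0) hf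
  · intro h; exact absurd (Finset.mem_univ _) h



-- closed form
lemma Td_closed : ∀ n d : ℕ, d ≤ n →
    Td q k n d = (∏ j ∈ Finset.range d, ((q:ℤ) - j))
      * (∏ j ∈ Finset.range d, ((q:ℤ) - 1 - j))^k
      * hfun (fun i => (i:ℤ) * ((q:ℤ) - i)^k) d (n - d) := by
  intro n
  induction n with
  | zero =>
    intro d hd
    interval_cases d
    rw [Td_zero_zero, hfun_zero_right]
    simp
  | succ n ih =>
    intro d hdn
    match d with
    | 0 =>
      rw [Td_zero_right q k (n+1) (by omega)]
      simp [hfun, Nat.succ_ne_zero]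
    | e+1 =>
      rw [Td_rec q k n (e+1) (by omega), Nat.add_sub_cancel]
      rcases Nat.lt_or_ge n (e+1) with hlt | hge
      · have he : e = n := by omega
        subst he
        rw [Td_gt q k e (e+1) (by omega), ih e (le_refl e), Nat.sub_self,
          Nat.sub_self, hfun_zero_right, hfun_zero_right,
          Finset.prod_range_succ, Finset.prod_range_succ, mul_pow]
        push_cast
        ring
      · rw [ih (e+1) hge, ih e (by omega),
          show n - e = (n - (e+1)) + 1 by omega,
          show n + 1 - (e+1) = (n - (e+1)) + 1 by omega,
          hfun_succ_succ]
        rw [Finset.prod_range_succ, Finset.prod_range_succ, mul_pow]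
        push_cast
        ring

lemma sum_W_eq (n : ℕ) (hn : 1 ≤ n) :
    (∑ f : Fin n → Fin q, Wfn q k f) = ∑ d ∈ Finset.Icc 1 n, Td q k n d := by
  unfold Td
  rw [Finset.sum_comm]
  refine Finset.sum_congr rfl fun f _ => ?_
  rw [Finset.sum_eq_single ((Finset.univ.image f).card)]
  · rw [if_pos rfl]
  · intro d _ hne
    rw [if_neg (fun h => hne h.symm)]
  · intro hmem
    exfalso
    apply hmem
    rw [Finset.mem_Icc]
    constructor
    · exact Finset.card_pos.2 ⟨f ⟨0, hn⟩, Finset.mem_image_of_mem f (Finset.mem_univ _)⟩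
    · have h1 : (Finset.univ.image f).card ≤ (Finset.univ : Finset (Fin n)).card :=
        Finset.card_image_le
      simpa using h1


end counting

section graphside
variable {q k : ℕ}

lemma graph_adj_inl_inr (G : FerrersGraph) (i : Fin G.n) (j : Fin G.m) :
    G.graph.Adj (Sum.inl i) (Sum.inr j) ↔ G.adj i j := by
  simp [FerrersGraph.graph, SimpleGraph.fromRel_adj]

lemma prod_div_blocks {M : Type*} [CommMonoid M] (k : ℕ) (hk : 0 < k) (u : ℕ → M) :
    ∀ n : ℕ, ∏ x ∈ Finset.range (n * k), u (x / k) = ∏ b ∈ Finset.range n, (u b) ^ k := by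
  intro n
  induction n with
  | zero => simp
  | succ n ih =>
    rw [show (n+1) * k = n * k + k by ring, Finset.prod_range_add, ih,
      Finset.prod_range_succ]
    congr 1
    have : ∀ x ∈ Finset.range k, u ((n * k + x) / k) = u n := by
      intro x hx
      rw [Finset.mem_range] at hx
      congr 1
      rw [show n * k + x = x + k * n by ring, Nat.add_mul_div_left x n hk,
        Nat.div_eq_of_lt hx, Nat.zero_add]
    rw [Finset.prod_congr rfl this, Finset.prod_const, Finset.card_range]

lemma card_colorings (q k : ℕ) (hk : 0 < k) (G : FerrersGraph) (hm : G.m = G.n * k)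
    (hadj : ∀ i j, G.adj i j ↔ (j : ℕ) < ((i : ℕ) + 1) * k) :
    (Nat.card (G.graph.Coloring (Fin q)) : ℤ) = ∑ f : Fin G.n → Fin q, Wfn q k f := by
  -- step 1: colorings as pairs
  have e1 : G.graph.Coloring (Fin q) ≃
      {c : Fin G.n ⊕ Fin G.m → Fin q // ∀ i j, G.adj i j → c (Sum.inl i) ≠ c (Sum.inr j)} :=
    { toFun := fun c => ⟨c, fun i j h => c.valid ((graph_adj_inl_inr G i j).2 h)⟩
      invFun := fun c => SimpleGraph.Coloring.mk c.1 (by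
        intro u v huv
        match u, v with
        | Sum.inl i, Sum.inl i' => simp [FerrersGraph.graph, SimpleGraph.fromRel_adj] at huv
        | Sum.inl i, Sum.inr j => exact c.2 i j ((graph_adj_inl_inr G i j).1 huv)
        | Sum.inr j, Sum.inl i => exact (c.2 i j ((graph_adj_inl_inr G i j).1 huv.symm)).symm
        | Sum.inr j, Sum.inr j' => simp [FerrersGraph.graph, SimpleGraph.fromRel_adj] at huv)
      left_inv := fun c => rfl
      right_inv := fun c => rfl }
  have e2 : {c : Fin G.n ⊕ Fin G.m → Fin q // ∀ i j, G.adj i j → c (Sum.inl i) ≠ c (Sum.inr j)}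
      ≃ {p : (Fin G.n → Fin q) × (Fin G.m → Fin q) // ∀ i j, G.adj i j → p.1 i ≠ p.2 j} :=
    Equiv.subtypeEquiv (Equiv.sumArrowEquivProdArrow _ _ _) (fun c => Iff.rfl)
  have e3 : {p : (Fin G.n → Fin q) × (Fin G.m → Fin q) // ∀ i j, G.adj i j → p.1 i ≠ p.2 j}
      ≃ Σ f : Fin G.n → Fin q, {g : Fin G.m → Fin q // ∀ i j, G.adj i j → f i ≠ g j} :=
    Equiv.subtypeProdEquivSigmaSubtype
      (fun (f : Fin G.n → Fin q) (g : Fin G.m → Fin q) => ∀ i j, G.adj i j → f i ≠ g j)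
  have e5 : ∀ f : Fin G.n → Fin q,
      {g : Fin G.m → Fin q // ∀ i j, G.adj i j → f i ≠ g j} ≃
      (∀ j : Fin G.m, {x : Fin q // x ∉ (Finset.univ.filter fun i => G.adj i j).image f}) := by
    intro f
    refine (Equiv.subtypeEquivRight ?_).trans Equiv.subtypePiEquivPi
    intro g
    constructor
    · intro h j hj
      rw [Finset.mem_image] at hj
      obtain ⟨i, hi, hfi⟩ := hj
      rw [Finset.mem_filter] at hi
      exact h i j hi.2 hfi
    · intro h i j ha hfi
      exact h j (hfi ▸ Finset.mem_image_of_mem f (Finset.mem_filter.2 ⟨Finset.mem_univ _, ha⟩))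
  have hcard : Nat.card (G.graph.Coloring (Fin q))
      = ∑ f : Fin G.n → Fin q,
          ∏ j : Fin G.m, (q - ((Finset.univ.filter fun i => G.adj i j).image f).card) := by
    rw [Nat.card_congr ((e1.trans e2).trans (e3.trans (Equiv.sigmaCongrRight e5)))]
    rw [Nat.card_eq_fintype_card, Fintype.card_sigma]
    refine Finset.sum_congr rfl fun f _ => ?_
    rw [Fintype.card_pi]
    refine Finset.prod_congr rfl fun j _ => ?_
    rw [Fintype.card_subtype_compl, Fintype.card_fin]
    congr 1
    exact Fintype.card_coe _
  have hfil : ∀ j : Fin G.m, (Finset.univ.filter fun i : Fin G.n => G.adj i j)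
      = Finset.univ.filter fun i : Fin G.n => (j : ℕ) / k ≤ (i : ℕ) := by
    intro j
    refine Finset.filter_congr fun i _ => ?_
    constructor
    · intro h
      exact Nat.lt_succ_iff.1 ((Nat.div_lt_iff_lt_mul hk).2 ((hadj i j).1 h))
    · intro h
      exact (hadj i j).2 ((Nat.div_lt_iff_lt_mul hk).1 (Nat.lt_succ_iff.2 h))
  have hNat : Nat.card (G.graph.Coloring (Fin q))
      = ∑ f : Fin G.n → Fin q, ∏ b ∈ Finset.range G.n, (q - Sfn q f b) ^ k := by
    rw [hcard]
    refine Finset.sum_congr rfl fun f _ => ?_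
    calc ∏ j : Fin G.m, (q - ((Finset.univ.filter fun i => G.adj i j).image f).card)
        = ∏ x ∈ Finset.range G.m, (q - Sfn q f (x / k)) := by
          rw [Finset.prod_congr rfl fun (j : Fin G.m) _ => by rw [hfil j]]
          exact Fin.prod_univ_eq_prod_range (fun x => q - Sfn q f (x / k)) G.m
      _ = ∏ b ∈ Finset.range G.n, (q - Sfn q f b) ^ k := by
          rw [hm]; exact prod_div_blocks k hk (fun x => q - Sfn q f x) G.n
  rw [hNat, Nat.cast_sum]
  refine Finset.sum_congr rfl fun f _ => ?_
  rw [Nat.cast_prod, Wfn]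
  refine Finset.prod_congr rfl fun b _ => ?_
  have hle : Sfn q f b ≤ q := by
    have := Finset.card_le_univ ((Finset.univ.filter fun i : Fin G.n => b ≤ (i : ℕ)).image f)
    simpa [Sfn] using this
  rw [Nat.cast_pow, Nat.cast_sub hle]


lemma ferrers_structure (k n : ℕ) (hk : 0 < k) (hn : 1 ≤ n) (G : FerrersGraph)
    (hG : G.rowPartition = (Finset.Icc 1 n).val.map fun i => i * k) :
    G.n = n ∧ G.m = G.n * k ∧ (∀ i j, G.adj i j ↔ (j : ℕ) < ((i : ℕ) + 1) * k) := by
  set deg : Fin G.n → ℕ := fun i => (Finset.univ.filter fun j => G.adj i j).card with hdeg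
  -- G.n = n
  have hGn : G.n = n := by
    have := congrArg Multiset.card hG
    simpa [FerrersGraph.rowPartition, Nat.card_Icc] using this
  -- degree is monotone
  have hmono : ∀ i i' : Fin G.n, i ≤ i' → deg i ≤ deg i' := by
    intro i i' hii
    apply Finset.card_le_card
    intro j hj
    rw [Finset.mem_filter] at hj ⊢
    exact ⟨Finset.mem_univ _, G.mono i i' j j hj.2 hii (le_refl j)⟩
  -- degrees: deg i = (i+1)*k
  have hdegval : ∀ i : Fin G.n, deg i = ((i : ℕ) + 1) * k := by
    intro i
    have hi_lt : (i : ℕ) < n := hGn ▸ i.isLt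
    -- lower bound
    have hge : ((i : ℕ) + 1) * k ≤ deg i := by
      have h := congrArg (Multiset.countP (fun x => x ≤ deg i)) hG
      rw [FerrersGraph.rowPartition, Multiset.countP_map, Multiset.countP_map] at h
      have h1 : (i : ℕ) + 1 ≤ (Finset.univ.filter fun i' : Fin G.n => deg i' ≤ deg i).card :=
        calc (i : ℕ) + 1 = (Finset.Iic i).card := (Fin.card_Iic i).symm
          _ ≤ _ := Finset.card_le_card fun i' hi' =>
              Finset.mem_filter.2 ⟨Finset.mem_univ _, hmono i' i (Finset.mem_Iic.1 hi')⟩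
      have h2 : ((Finset.Icc 1 n).filter fun j => j * k ≤ deg i).card ≤ deg i / k := by
        calc ((Finset.Icc 1 n).filter fun j => j * k ≤ deg i).card
            ≤ (Finset.Icc 1 (deg i / k)).card := Finset.card_le_card fun j hj => by
              rw [Finset.mem_filter, Finset.mem_Icc] at hj
              exact Finset.mem_Icc.2 ⟨hj.1.1, (Nat.le_div_iff_mul_le hk).2 hj.2⟩
          _ ≤ deg i / k := by rw [Nat.card_Icc, Nat.add_sub_cancel]
      exact (Nat.le_div_iff_mul_le hk).1 (le_trans (le_trans h1 (le_of_eq h)) h2)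
    -- upper bound
    have hle : deg i ≤ ((i : ℕ) + 1) * k := by
      by_contra hcon
      push_neg at hcon
      have h := congrArg (Multiset.countP (fun x => deg i ≤ x)) hG
      rw [FerrersGraph.rowPartition, Multiset.countP_map, Multiset.countP_map] at h
      have h1 : n - (i : ℕ) ≤ (Finset.univ.filter fun i' : Fin G.n => deg i ≤ deg i').card :=
        calc n - (i : ℕ) = (Finset.Ici i).card := by rw [Fin.card_Ici]; omega
          _ ≤ _ := Finset.card_le_card fun i' hi' =>
              Finset.mem_filter.2 ⟨Finset.mem_univ _, hmono i i' (Finset.mem_Ici.1 hi')⟩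
      have h2 : ((Finset.Icc 1 n).filter fun j => deg i ≤ j * k).card ≤ n - (i : ℕ) - 1 := by
        calc ((Finset.Icc 1 n).filter fun j => deg i ≤ j * k).card
            ≤ (Finset.Icc ((i : ℕ) + 2) n).card := Finset.card_le_card fun j hj => by
              rw [Finset.mem_filter, Finset.mem_Icc] at hj
              refine Finset.mem_Icc.2 ⟨?_, hj.1.2⟩
              by_contra hj2
              push_neg at hj2
              have : j * k ≤ ((i : ℕ) + 1) * k := Nat.mul_le_mul_right k (by omega)
              omega
          _ ≤ n - (i : ℕ) - 1 := by rw [Nat.card_Icc]; omega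
      have := le_trans (le_trans h1 (le_of_eq h)) h2
      omega
    omega
  -- adjacency characterization
  have hchar : ∀ i j, G.adj i j ↔ (j : ℕ) < ((i : ℕ) + 1) * k := by
    intro i j
    have hcardS : (Finset.univ.filter fun j' => G.adj i j').card = ((i : ℕ) + 1) * k := hdegval i
    have hdown : ∀ j' j'' : Fin G.m, j' ∈ (Finset.univ.filter fun j' => G.adj i j') → j'' ≤ j' →
        j'' ∈ (Finset.univ.filter fun j' => G.adj i j') := by
      intro j' j'' h1 h2
      rw [Finset.mem_filter] at h1 ⊢
      exact ⟨Finset.mem_univ _, G.mono i i j' j'' h1.2 (le_refl i) h2⟩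
    constructor
    · intro h
      have hsub : Finset.Iic j ⊆ Finset.univ.filter fun j' => G.adj i j' := fun j' hj' =>
        hdown j j' (Finset.mem_filter.2 ⟨Finset.mem_univ _, h⟩) (Finset.mem_Iic.1 hj')
      have := Finset.card_le_card hsub
      rw [Fin.card_Iic, hcardS] at this
      omega
    · intro h
      by_contra hadj'
      have hsub : (Finset.univ.filter fun j' => G.adj i j') ⊆ Finset.Iio j := by
        intro j' hj'
        rw [Finset.mem_Iio]
        by_contra hge
        push_neg at hge
        exact hadj' (Finset.mem_filter.1 (hdown j' j hj' hge)).2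
      have := Finset.card_le_card hsub
      rw [Fin.card_Iio, hcardS] at this
      omega
  -- m = n * k
  have hlast : G.n - 1 < G.n := Nat.sub_lt G.hn one_pos
  have hdeglast : deg ⟨G.n - 1, hlast⟩ = G.n * k := by
    rw [hdegval ⟨G.n - 1, hlast⟩]
    have hv : ((⟨G.n - 1, hlast⟩ : Fin G.n) : ℕ) = G.n - 1 := rfl
    rw [hv]
    have : G.n - 1 + 1 = G.n := by omega
    rw [this]
  have hm1 : G.n * k ≤ G.m := by
    rw [← hdeglast]
    calc deg ⟨G.n - 1, hlast⟩ ≤ (Finset.univ : Finset (Fin G.m)).card := Finset.card_le_univ _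
      _ = G.m := by simp
  have hm2 : G.m ≤ G.n * k := by
    have h := (hchar _ _).1 G.corner2
    have hv1 : ((⟨G.m - 1, Nat.sub_lt G.hm one_pos⟩ : Fin G.m) : ℕ) = G.m - 1 := rfl
    have hv2 : ((⟨G.n - 1, Nat.sub_lt G.hn one_pos⟩ : Fin G.n) : ℕ) = G.n - 1 := rfl
    rw [hv1, hv2] at h
    have hnn : G.n - 1 + 1 = G.n := by omega
    rw [hnn] at h
    omega
  exact ⟨hGn, le_antisymm hm2 hm1, hchar⟩


lemma poly_eq_of_nat_eval (p r : Polynomial ℤ)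
    (h : ∀ q : ℕ, p.eval (q : ℤ) = r.eval (q : ℤ)) : p = r := by
  rw [← sub_eq_zero]
  apply Polynomial.eq_zero_of_infinite_isRoot
  apply Set.Infinite.mono (s := Set.range ((↑) : ℕ → ℤ))
  · rintro x ⟨q, rfl⟩
    simp [Polynomial.IsRoot, h q]
  · exact Set.infinite_range_of_injective fun a b => by exact_mod_cast id

open PowerSeries Polynomial in
/-- For `n, k ≥ 1` let `G_{n,k}` be a Ferrers graph with associated partition the
`k`-staircase `(nk, …, 2k, k)`.  Then
`∑_{n≥1} ch(G_{n,k})(t) u^n = ∑_{n≥1} (t)_n ((t-1)_n)^k u^n / ∏_{i=1}^n (1 - i(t-i)^k u)`,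
where `ch` is the chromatic polynomial; the identity of power series in `u` over
`ℤ[t]` is stated coefficientwise (the coefficient of `u^N` of the `n`-th summand on
the right vanishes for `n > N`). -/
theorem chromatic_ferrers_staircase_generating_function (k : ℕ) (hk : 1 ≤ k)
    (G : ℕ → FerrersGraph)
    (hG : ∀ n, 1 ≤ n → (G n).rowPartition = (Finset.Icc 1 n).val.map fun i => i * k)
    (ch : ℕ → Polynomial ℤ)
    (hch : ∀ n, 1 ≤ n → ∀ q : ℕ,
      (ch n).eval (q : ℤ) = (Nat.card ((G n).graph.Coloring (Fin q)) : ℤ)) :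
    ∀ N : ℕ,
      (PowerSeries.coeff N) (PowerSeries.mk fun j =>
          if j = 0 then 0 else ch j) =
      ∑ n ∈ Finset.Icc 1 N, (PowerSeries.coeff N)
        (PowerSeries.C ((∏ j ∈ Finset.range n,
              (Polynomial.X - (j : Polynomial ℤ))) *
            (∏ j ∈ Finset.range n, (Polynomial.X - 1 - (j : Polynomial ℤ))) ^ k) *
          PowerSeries.X ^ n *
          PowerSeries.invOfUnit
            (∏ i ∈ Finset.Icc 1 n,
              (1 - PowerSeries.C ((i : Polynomial ℤ) *
                  (Polynomial.X - (i : Polynomial ℤ)) ^ k) * PowerSeries.X)) 1) := by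
  intro N
  rw [PowerSeries.coeff_mk]
  rcases Nat.eq_zero_or_pos N with hN0 | hN
  · subst hN0
    simp
  · rw [if_neg (by omega)]
    -- abbreviations
    set P : ℕ → Polynomial ℤ := fun n =>
      (∏ j ∈ Finset.range n, (Polynomial.X - (j : Polynomial ℤ))) *
        (∏ j ∈ Finset.range n, (Polynomial.X - 1 - (j : Polynomial ℤ))) ^ k with hP
    -- rewrite the right-hand side coefficients
    have hsum : ∑ n ∈ Finset.Icc 1 N, (PowerSeries.coeff N)
        (PowerSeries.C (P n) * PowerSeries.X ^ n *
          PowerSeries.invOfUnit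
            (∏ i ∈ Finset.Icc 1 n,
              (1 - PowerSeries.C ((i : Polynomial ℤ) *
                  (Polynomial.X - (i : Polynomial ℤ)) ^ k) * PowerSeries.X)) 1)
        = ∑ n ∈ Finset.Icc 1 N,
            P n * hfun (fun i => (i : Polynomial ℤ) * (Polynomial.X - (i : Polynomial ℤ)) ^ k)
              n (N - n) := by
      refine Finset.sum_congr rfl fun n hn => ?_
      rw [Finset.mem_Icc] at hn
      have hinv : PowerSeries.invOfUnit
            (∏ i ∈ Finset.Icc 1 n,
              (1 - PowerSeries.C ((i : Polynomial ℤ) *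
                  (Polynomial.X - (i : Polynomial ℤ)) ^ k) * PowerSeries.X)) 1
          = ∏ i ∈ Finset.Icc 1 n, PowerSeries.mk
              (fun m => ((i : Polynomial ℤ) * (Polynomial.X - (i : Polynomial ℤ)) ^ k) ^ m) :=
        invOfUnit_prod _ _
      rw [hinv, mul_assoc, PowerSeries.coeff_C_mul]
      congr 1
      have hNn : N = (N - n) + n := (Nat.sub_add_cancel hn.2).symm
      conv_lhs => rw [hNn, PowerSeries.coeff_X_pow_mul]
      exact coeff_prod_geom _ n (N - n)
    rw [hsum]
    -- the polynomial identity, checked at every natural number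
    apply poly_eq_of_nat_eval
    intro q
    obtain ⟨hGn, hGm, hadj⟩ := ferrers_structure k N (by omega) hN (G N) (hG N hN)
    have hcc := card_colorings q k (by omega) (G N) hGm hadj
    have hTdsum : (∑ f : Fin N → Fin q, Wfn q k f) = ∑ d ∈ Finset.Icc 1 N, Td q k N d :=
      sum_W_eq q k N hN
    have hTsumGn : (∑ f : Fin (G N).n → Fin q, Wfn q k f) = ∑ f : Fin N → Fin q, Wfn q k f := by
      rw [hGn]
    calc Polynomial.eval (q : ℤ) (ch N)
        = (Nat.card ((G N).graph.Coloring (Fin q)) : ℤ) := hch N hN q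
      _ = ∑ f : Fin (G N).n → Fin q, Wfn q k f := hcc
      _ = ∑ d ∈ Finset.Icc 1 N, Td q k N d := by rw [hTsumGn, hTdsum]
      _ = ∑ d ∈ Finset.Icc 1 N, (∏ j ∈ Finset.range d, ((q:ℤ) - j))
            * (∏ j ∈ Finset.range d, ((q:ℤ) - 1 - j))^k
            * hfun (fun i => (i:ℤ) * ((q:ℤ) - i)^k) d (N - d) := by
          refine Finset.sum_congr rfl fun d hd => ?_
          rw [Finset.mem_Icc] at hd
          exact Td_closed q k N d hd.2
      _ = Polynomial.eval (q : ℤ) (∑ n ∈ Finset.Icc 1 N,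
            P n * hfun (fun i => (i : Polynomial ℤ) * (Polynomial.X - (i : Polynomial ℤ)) ^ k)
              n (N - n)) := by
          rw [Polynomial.eval_finset_sum]
          refine Finset.sum_congr rfl fun n _ => ?_
          rw [hP]
          simp only []
          rw [Polynomial.eval_mul, Polynomial.eval_mul, Polynomial.eval_pow,
            Polynomial.eval_prod, Polynomial.eval_prod]
          have hev : Polynomial.eval (q:ℤ)
              (hfun (fun i => (i : Polynomial ℤ) * (Polynomial.X - (i : Polynomial ℤ)) ^ k) n (N - n))
              = hfun (fun i => (i:ℤ) * ((q:ℤ) - i)^k) n (N - n) := by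
            have hmap := hfun_map (Polynomial.evalRingHom (q:ℤ))
              (fun i => (i : Polynomial ℤ) * (Polynomial.X - (i : Polynomial ℤ)) ^ k) n (N - n)
            have : (fun i : ℕ => (Polynomial.evalRingHom (q:ℤ))
                ((i : Polynomial ℤ) * (Polynomial.X - (i : Polynomial ℤ)) ^ k))
                = fun i : ℕ => (i:ℤ) * ((q:ℤ) - i)^k := by
              funext i
              simp
            rw [this] at hmap
            exact hmap
          rw [hev,
            show (∏ j ∈ Finset.range n, Polynomial.eval (q:ℤ) (Polynomial.X - (j : Polynomial ℤ)))
                = ∏ j ∈ Finset.range n, ((q:ℤ) - j) from Finset.prod_congr rfl fun j _ => by simp,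
            show (∏ j ∈ Finset.range n, Polynomial.eval (q:ℤ) (Polynomial.X - 1 - (j : Polynomial ℤ)))
                = ∏ j ∈ Finset.range n, ((q:ℤ) - 1 - j) from Finset.prod_congr rfl fun j _ => by simp]


end graphside

end
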